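/- Let b₂ > b₁ > 0 and let θ_{b₁}, θ_{b₂} be the respective minimizers of E_{b₁}, E_{b₂} (both with range in [0, π/2)). Then θ_{b₂}(s) ≥ θ_{b₁}(s) for all s ∈ [0,1]; in fact θ_{b₂}(s) > θ_{b₁}(s) for s ∈ (0,1]. -/

import Mathlib

open MeasureTheory Real Set

/-- Total energy `E(θ) = (1/2)∫₀¹ θ'² − b ∫₀¹ (1−s) sin θ(s) ds`,
where `θ'` is the (weak) derivative of `θ`. -/
noncomputable def energy (b : ℝ) (θ θ' : ℝ → ℝ) : ℝ :=
  (1/2) * (∫ s in (0:ℝ)..1, (θ' s)^2) - b * ∫ s in (0:ℝ)..1, (1 - s) * Real.sin (θ s)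

/-- `θ ∈ H¹([0,1])` with `θ(0) = 0`, represented by a square-integrable weak
derivative `θ'` of which `θ` is the primitive. -/
def InH101 (θ θ' : ℝ → ℝ) : Prop :=
  (∀ s ∈ Set.Icc (0:ℝ) 1, θ s = ∫ t in (0:ℝ)..s, θ' t) ∧
  IntervalIntegrable θ' MeasureTheory.volume 0 1 ∧
  IntervalIntegrable (fun s => (θ' s)^2) MeasureTheory.volume 0 1

/-- `θ` is a global minimizer of the energy `E_b` on `H¹_{0,1}`. -/
def IsMinimizer (b : ℝ) (θ θ' : ℝ → ℝ) : Prop :=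
  InH101 θ θ' ∧ ∀ ψ ψ', InH101 ψ ψ' → energy b θ θ' ≤ energy b ψ ψ'

/-- A classical solution of the Euler–Lagrange boundary value problem
`θ'' = −b(1−s) cos θ`, `θ(0) = 0`, `θ'(1) = 0`. -/
def ClassicalSolution (b : ℝ) (θ : ℝ → ℝ) : Prop :=
  ContDiff ℝ 2 θ ∧ θ 0 = 0 ∧ deriv θ 1 = 0 ∧
  ∀ s ∈ Set.Icc (0:ℝ) 1, deriv (deriv θ) s = -b * (1 - s) * Real.cos (θ s)


lemma abs_sin_le_abs' (z : ℝ) : |Real.sin z| ≤ |z| := by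
  have key : ∀ w : ℝ, 0 ≤ w → |Real.sin w| ≤ w := by
    intro w hw
    rw [abs_le]
    constructor
    · rcases le_total w 1 with h1 | h1
      · have : 0 ≤ Real.sin w := Real.sin_nonneg_of_nonneg_of_le_pi hw (h1.trans (by linarith [Real.pi_gt_three]))
        linarith
      · linarith [Real.neg_one_le_sin w]
    · exact Real.sin_le hw
  rcases le_total 0 z with h | h
  · rw [abs_of_nonneg h]; exact key z h
  · rw [abs_of_nonpos h, ← abs_neg, ← Real.sin_neg]
    exact key (-z) (by linarith)

lemma cos_lip (a b : ℝ) : |Real.cos a - Real.cos b| ≤ |a - b| := by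
  rw [Real.cos_sub_cos]
  have h1 : |Real.sin ((a + b) / 2)| ≤ 1 := Real.abs_sin_le_one _
  have h2 : |Real.sin ((a - b) / 2)| ≤ |a - b| / 2 := by
    have := abs_sin_le_abs' ((a - b) / 2)
    rwa [abs_div, abs_two] at this
  have e : |-2 * Real.sin ((a + b) / 2) * Real.sin ((a - b) / 2)|
      = 2 * |Real.sin ((a + b) / 2)| * |Real.sin ((a - b) / 2)| := by
    rw [abs_mul, abs_mul]; norm_num
  rw [e]
  nlinarith [abs_nonneg (Real.sin ((a + b) / 2)), abs_nonneg (Real.sin ((a - b) / 2)), abs_nonneg (a - b)]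

lemma sin_taylor_bound (x h : ℝ) : |Real.sin (x + h) - Real.sin x - h * Real.cos x| ≤ h^2 := by
  have hder : ∀ t ∈ Set.uIcc (0:ℝ) h, HasDerivAt (fun t => Real.sin (x + t)) (Real.cos (x + t)) t := by
    intro t _
    simpa [Function.comp_def] using (Real.hasDerivAt_sin (x + t)).comp t ((hasDerivAt_id t).const_add x)
  have hint : IntervalIntegrable (fun t => Real.cos (x + t)) volume 0 h :=
    (Real.continuous_cos.comp (continuous_const.add continuous_id)).intervalIntegrable _ _
  have key : Real.sin (x + h) - Real.sin x = ∫ t in (0:ℝ)..h, Real.cos (x + t) := by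
    rw [intervalIntegral.integral_eq_sub_of_hasDerivAt hder hint]
    simp
  have hconst : h * Real.cos x = ∫ t in (0:ℝ)..h, Real.cos x := by simp
  have key2 : Real.sin (x + h) - Real.sin x - h * Real.cos x
      = ∫ t in (0:ℝ)..h, (Real.cos (x + t) - Real.cos x) := by
    rw [intervalIntegral.integral_sub hint (intervalIntegrable_const), ← key, ← hconst]
  rw [key2]
  have hb : ∀ t ∈ Set.uIoc (0:ℝ) h, ‖Real.cos (x + t) - Real.cos x‖ ≤ |h| := by
    intro t ht
    have h1 : |Real.cos (x + t) - Real.cos x| ≤ |t| := by simpa using cos_lip (x + t) x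
    refine h1.trans ?_
    rcases le_total 0 h with hh | hh
    · rw [Set.uIoc_of_le hh] at ht
      rw [abs_of_nonneg (le_of_lt ht.1), abs_of_nonneg hh]; exact ht.2
    · rw [Set.uIoc_of_ge hh] at ht
      rw [abs_of_nonpos (ht.2.trans (le_refl 0)), abs_of_nonpos hh]; linarith [ht.1]
  calc |∫ t in (0:ℝ)..h, (Real.cos (x + t) - Real.cos x)| ≤ |h| * |h - 0| :=
        intervalIntegral.norm_integral_le_of_norm_le_const hb
    _ = h^2 := by rw [sub_zero, ← abs_mul, ← sq, abs_sq]

lemma exists_nice (b : ℝ) (θ θ' : ℝ → ℝ) (hb : 0 < b) (hmin : IsMinimizer b θ θ') :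
    ∃ u g : ℝ → ℝ, (∀ s ∈ Set.Icc (0:ℝ) 1, u s = θ s) ∧ u 0 = 0 ∧ Continuous u ∧
      Continuous g ∧ g 1 = 0 ∧
      (∀ s, HasDerivAt u (g s) s) ∧
      (∀ s ∈ Set.Icc (0:ℝ) 1, HasDerivAt g (-(b * (1 - s) * Real.cos (θ s))) s) := by
  obtain ⟨⟨hprim, hI1, hI2⟩, hle⟩ := hmin
  have h01 : (0:ℝ) ≤ 1 := by norm_num
  have huIcc : Set.uIcc (0:ℝ) 1 = Set.Icc 0 1 := Set.uIcc_of_le h01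
  -- θ is continuous on [0,1]
  have hPcont : ContinuousOn (fun x => ∫ t in (0:ℝ)..x, θ' t) (Set.Icc 0 1) := by
    have := intervalIntegral.continuousOn_primitive_interval (a := 0) (b := 1) (μ := volume)
      (f := θ') (by rw [huIcc]; exact (intervalIntegrable_iff_integrableOn_Icc_of_le h01).mp hI1)
    rwa [huIcc] at this
  have hθcont : ContinuousOn θ (Set.Icc 0 1) := hPcont.congr (fun s hs => hprim s hs)
  -- clamp
  set proj : ℝ → ℝ := fun s => max 0 (min 1 s) with hprojdef
  have hprojcont : Continuous proj := continuous_const.max (continuous_const.min continuous_id)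
  have hprojmem : ∀ s, proj s ∈ Set.Icc (0:ℝ) 1 :=
    fun s => ⟨le_max_left _ _, max_le h01 (min_le_left _ _)⟩
  have hprojid : ∀ s ∈ Set.Icc (0:ℝ) 1, proj s = s := by
    intro s hs
    simp only [hprojdef]
    rw [min_eq_right hs.2, max_eq_right hs.1]
  set θc : ℝ → ℝ := fun s => θ (proj s) with hθcdef
  have hθccont : Continuous θc := hθcont.comp_continuous hprojcont hprojmem
  have hθceq : ∀ s ∈ Set.Icc (0:ℝ) 1, θc s = θ s := fun s hs => by
    simp only [hθcdef]; rw [hprojid s hs]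
  set hh : ℝ → ℝ := fun σ => b * ((1 - σ) * Real.cos (θc σ)) with hhdef
  have hhcont : Continuous hh :=
    continuous_const.mul ((continuous_const.sub continuous_id).mul
      (Real.continuous_cos.comp hθccont))
  set W : ℝ → ℝ := fun t => ∫ σ in (0:ℝ)..t, hh σ with hWdef
  have hW : ∀ t, HasDerivAt W (hh t) t := fun t =>
    intervalIntegral.integral_hasDerivAt_right (hhcont.intervalIntegrable _ _)
      (hhcont.stronglyMeasurableAtFilter _ _) hhcont.continuousAt
  have hWcont : Continuous W := by
    have : Differentiable ℝ W := fun t => (hW t).differentiableAt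
    exact this.continuous
  set G : ℝ → ℝ := fun t => W 1 - W t with hGdef
  have hGcont : Continuous G := continuous_const.sub hWcont
  have hG : ∀ t, HasDerivAt G (-(hh t)) t := by
    intro t
    have := (hasDerivAt_const t (W 1)).sub (hW t)
    rw [zero_sub] at this
    exact this
  have hG1 : G 1 = 0 := sub_self _
  -- first variation
  have hEL : ∀ g : ℝ → ℝ, Continuous g →
      (∫ t in (0:ℝ)..1, θ' t * g t)
        = b * ∫ s in (0:ℝ)..1, (1 - s) * Real.cos (θ s) * (∫ t in (0:ℝ)..s, g t) := by
    intro g hg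
    set φ : ℝ → ℝ := fun s => ∫ t in (0:ℝ)..s, g t with hφdef
    have hφd : ∀ s, HasDerivAt φ (g s) s := fun s =>
      intervalIntegral.integral_hasDerivAt_right (hg.intervalIntegrable _ _)
        (hg.stronglyMeasurableAtFilter _ _) hg.continuousAt
    have hφcont : Continuous φ := by
      have : Differentiable ℝ φ := fun t => (hφd t).differentiableAt
      exact this.continuous
    have hφ0 : φ 0 = 0 := intervalIntegral.integral_same
    set A : ℝ := (∫ t in (0:ℝ)..1, θ' t * g t)
      - b * ∫ s in (0:ℝ)..1, (1 - s) * Real.cos (θ s) * φ s with hAdef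
    -- integrability facts
    have hIθg : IntervalIntegrable (fun t => θ' t * g t) volume 0 1 :=
      hI1.mul_continuousOn hg.continuousOn
    have hIg2 : IntervalIntegrable (fun t => (g t)^2) volume 0 1 :=
      ((hg.pow 2)).intervalIntegrable _ _
    have hIφ2 : IntervalIntegrable (fun t => (φ t)^2) volume 0 1 :=
      ((hφcont.pow 2)).intervalIntegrable _ _
    have hcos2 : ContinuousOn (fun s => (1 - s) * Real.cos (θ s) * φ s) (Set.Icc (0:ℝ) 1) :=
      (((continuous_const.sub continuous_id).continuousOn.mul
        (Real.continuous_cos.comp_continuousOn hθcont)).mul hφcont.continuousOn)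
    have hIcos2 : IntervalIntegrable (fun s => (1 - s) * Real.cos (θ s) * φ s) volume 0 1 := by
      apply ContinuousOn.intervalIntegrable; rwa [huIcc]
    set K : ℝ := (1/2) * ∫ t in (0:ℝ)..1, (g t)^2 with hKdef
    set Cφ : ℝ := ∫ t in (0:ℝ)..1, (φ t)^2 with hCφdef
    set C : ℝ := K + b * Cφ with hCdef
    have hK0 : 0 ≤ K := by
      have := intervalIntegral.integral_nonneg (f := fun t => (g t)^2) (μ := volume) h01
        (fun u _ => sq_nonneg _)
      rw [hKdef]; linarith
    have hCφ0 : 0 ≤ Cφ :=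
      intervalIntegral.integral_nonneg (f := fun t => (φ t)^2) (μ := volume) h01
        (fun u _ => sq_nonneg _)
    have hC0 : 0 ≤ C := by rw [hCdef]; positivity
    have hkey : ∀ ε : ℝ, 0 ≤ ε * A + ε^2 * C := by
      intro ε
      set ψ : ℝ → ℝ := fun s => θ s + ε * φ s with hψdef
      set ψ' : ℝ → ℝ := fun t => θ' t + ε * g t with hψ'def
      have hεg : Continuous (fun t => ε * g t) := continuous_const.mul hg
      have hsq : (fun s => (ψ' s)^2)
          = fun s => (θ' s)^2 + ((2*ε) * (θ' s * g s) + ε^2 * (g s)^2) := by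
        funext s; simp only [hψ'def]; ring
      have hIψ'2 : IntervalIntegrable (fun s => (ψ' s)^2) volume 0 1 := by
        rw [hsq]
        exact hI2.add ((hIθg.const_mul (2*ε)).add (hIg2.const_mul (ε^2)))
      have hψH : InH101 ψ ψ' := by
        refine ⟨?_, hI1.add (hεg.intervalIntegrable _ _), hIψ'2⟩
        intro s hs
        have hsub : Set.uIcc (0:ℝ) s ⊆ Set.uIcc (0:ℝ) 1 := by
          rw [huIcc, Set.uIcc_of_le hs.1]
          exact Set.Icc_subset_Icc le_rfl hs.2
        rw [intervalIntegral.integral_add (hI1.mono_set hsub)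
          ((hεg.intervalIntegrable _ _))]
        rw [intervalIntegral.integral_const_mul]
        rw [← hprim s hs]
      have hmin' := hle ψ ψ' hψH
      -- expand the quadratic term
      have hq : ∫ s in (0:ℝ)..1, (ψ' s)^2
          = (∫ s in (0:ℝ)..1, (θ' s)^2) + ((2*ε) * (∫ s in (0:ℝ)..1, θ' s * g s)
            + ε^2 * ∫ s in (0:ℝ)..1, (g s)^2) := by
        rw [hsq, intervalIntegral.integral_add hI2
          ((hIθg.const_mul (2*ε)).add (hIg2.const_mul (ε^2))),
          intervalIntegral.integral_add (hIθg.const_mul (2*ε)) (hIg2.const_mul (ε^2)),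
          intervalIntegral.integral_const_mul, intervalIntegral.integral_const_mul]
      -- expand the sine term
      set R : ℝ → ℝ := fun s =>
        Real.sin (θ s + ε * φ s) - Real.sin (θ s) - (ε * φ s) * Real.cos (θ s) with hRdef
      have hRcont : ContinuousOn (fun s => (1 - s) * R s) (Set.Icc (0:ℝ) 1) := by
        apply (continuous_const.sub continuous_id).continuousOn.mul
        apply ContinuousOn.sub
        apply ContinuousOn.sub
        · exact Real.continuous_sin.comp_continuousOn
            (hθcont.add (continuous_const.mul hφcont).continuousOn)
        · exact Real.continuous_sin.comp_continuousOn hθcont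
        · exact (continuous_const.mul hφcont).continuousOn.mul
            (Real.continuous_cos.comp_continuousOn hθcont)
      have hIR : IntervalIntegrable (fun s => (1 - s) * R s) volume 0 1 := by
        apply ContinuousOn.intervalIntegrable; rwa [huIcc]
      have hI1s : IntervalIntegrable (fun s => (1 - s) * Real.sin (θ s)) volume 0 1 := by
        apply ContinuousOn.intervalIntegrable
        rw [huIcc]
        exact (continuous_const.sub continuous_id).continuousOn.mul
          (Real.continuous_sin.comp_continuousOn hθcont)
      have hsin : ∫ s in (0:ℝ)..1, (1 - s) * Real.sin (ψ s)
          = (∫ s in (0:ℝ)..1, (1 - s) * Real.sin (θ s))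
            + (ε * (∫ s in (0:ℝ)..1, (1 - s) * Real.cos (θ s) * φ s)
              + ∫ s in (0:ℝ)..1, (1 - s) * R s) := by
        have hpt : (fun s => (1 - s) * Real.sin (ψ s))
            = fun s => (1 - s) * Real.sin (θ s)
              + (ε * ((1 - s) * Real.cos (θ s) * φ s) + (1 - s) * R s) := by
          funext s; simp only [hψdef, hRdef]; ring
        rw [hpt, intervalIntegral.integral_add hI1s ((hIcos2.const_mul ε).add hIR),
          intervalIntegral.integral_add (hIcos2.const_mul ε) hIR,
          intervalIntegral.integral_const_mul]
      -- the remainder bound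
      have hRbound : |∫ s in (0:ℝ)..1, (1 - s) * R s| ≤ ε^2 * Cφ := by
        have step1 : |∫ s in (0:ℝ)..1, (1 - s) * R s| ≤ ∫ s in (0:ℝ)..1, |(1 - s) * R s| :=
          intervalIntegral.abs_integral_le_integral_abs h01
        have step2 : ∫ s in (0:ℝ)..1, |(1 - s) * R s| ≤ ∫ s in (0:ℝ)..1, ε^2 * (φ s)^2 := by
          apply intervalIntegral.integral_mono_on h01
          · apply ContinuousOn.intervalIntegrable
            rw [huIcc]; exact hRcont.abs
          · exact hIφ2.const_mul (ε^2)
          · intro s hs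
            have habs1 : |1 - s| ≤ 1 := by
              rw [abs_le]; constructor <;> [linarith [hs.2]; linarith [hs.1]]
            have habs2 : |R s| ≤ (ε * φ s)^2 := by
              simpa only [hRdef] using sin_taylor_bound (θ s) (ε * φ s)
            calc |(1 - s) * R s| = |1 - s| * |R s| := abs_mul _ _
              _ ≤ 1 * (ε * φ s)^2 := by
                  apply mul_le_mul habs1 habs2 (abs_nonneg _) zero_le_one
              _ = ε^2 * (φ s)^2 := by ring
        have step3 : ∫ s in (0:ℝ)..1, ε^2 * (φ s)^2 = ε^2 * Cφ := by
          rw [intervalIntegral.integral_const_mul]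
        linarith
      -- assemble
      have hdiff : energy b ψ ψ' - energy b θ θ'
          = ε * A + ε^2 * K - b * ∫ s in (0:ℝ)..1, (1 - s) * R s := by
        simp only [energy, hq, hsin, hAdef, hKdef]
        ring
      have h1 : 0 ≤ energy b ψ ψ' - energy b θ θ' := by linarith
      have h2 : -b * ∫ s in (0:ℝ)..1, (1 - s) * R s ≤ b * (ε^2 * Cφ) := by
        have := neg_abs_le (∫ s in (0:ℝ)..1, (1 - s) * R s)
        nlinarith [hRbound, hb.le, abs_nonneg (∫ s in (0:ℝ)..1, (1 - s) * R s)]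
      have : 0 ≤ ε * A + ε^2 * K + b * (ε^2 * Cφ) := by linarith [hdiff ▸ h1]
      rw [hCdef]; ring_nf; ring_nf at this; linarith
    -- conclude A = 0
    have hA0 : A = 0 := by
      have hC1 : (0:ℝ) < C + 1 := by linarith
      have key := hkey (-A / (C+1))
      have e1 : -A / (C+1) * A + (-A / (C+1))^2 * C
          = (A^2 * (-(C+1) + C)) / (C+1)^2 := by
        field_simp
      rw [e1] at key
      have hnum : 0 ≤ A^2 * (-(C+1) + C) := by
        have := (div_nonneg_iff.mp key)
        rcases this with ⟨h, _⟩ | ⟨_, h⟩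
        · exact h
        · nlinarith
      have : A^2 ≤ 0 := by nlinarith
      have : A^2 = 0 := le_antisymm this (sq_nonneg A)
      exact pow_eq_zero_iff (by norm_num) |>.mp this
    rw [hAdef] at hA0
    linarith
  -- integration by parts: for continuous g, ∫ (θ' - G) g = 0
  have hIBP : ∀ g : ℝ → ℝ, Continuous g → (∫ t in (0:ℝ)..1, (θ' t - G t) * g t) = 0 := by
    intro g hg
    set φ : ℝ → ℝ := fun s => ∫ t in (0:ℝ)..s, g t with hφdef
    have hφd : ∀ s, HasDerivAt φ (g s) s := fun s =>
      intervalIntegral.integral_hasDerivAt_right (hg.intervalIntegrable _ _)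
        (hg.stronglyMeasurableAtFilter _ _) hg.continuousAt
    have hφcont : Continuous φ := by
      have : Differentiable ℝ φ := fun t => (hφd t).differentiableAt
      exact this.continuous
    have h1 := hEL g hg
    have h2 : b * ∫ s in (0:ℝ)..1, (1 - s) * Real.cos (θ s) * φ s
        = ∫ s in (0:ℝ)..1, hh s * φ s := by
      rw [← intervalIntegral.integral_const_mul]
      apply intervalIntegral.integral_congr
      intro s hs
      rw [huIcc] at hs
      simp only [hhdef]
      rw [hθceq s hs]
      ring
    have hIBP0 : ∫ s in (0:ℝ)..1, (hh s * φ s + W s * g s) = W 1 * φ 1 - W 0 * φ 0 :=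
      intervalIntegral.integral_deriv_mul_eq_sub (fun x _ => hW x) (fun x _ => hφd x)
        (hhcont.intervalIntegrable _ _) (hg.intervalIntegrable _ _)
    have hW0 : W 0 = 0 := intervalIntegral.integral_same
    have hsplit : ∫ s in (0:ℝ)..1, (hh s * φ s + W s * g s)
        = (∫ s in (0:ℝ)..1, hh s * φ s) + ∫ s in (0:ℝ)..1, W s * g s :=
      intervalIntegral.integral_add ((hhcont.mul hφcont).intervalIntegrable _ _)
        ((hWcont.mul hg).intervalIntegrable _ _)
    have h3 : ∫ s in (0:ℝ)..1, hh s * φ s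
        = W 1 * φ 1 - ∫ s in (0:ℝ)..1, W s * g s := by
      rw [hsplit, hW0] at hIBP0; linarith [hIBP0]
    have h4 : ∫ s in (0:ℝ)..1, G s * g s
        = W 1 * φ 1 - ∫ s in (0:ℝ)..1, W s * g s := by
      have hpt : (fun s => G s * g s) = fun s => W 1 * g s - W s * g s := by
        funext s; simp only [hGdef]; ring
      rw [hpt, intervalIntegral.integral_sub (g := fun s => W s * g s) ((hg.intervalIntegrable _ _).const_mul (W 1))
        ((hWcont.mul hg).intervalIntegrable _ _), intervalIntegral.integral_const_mul]
    have h5 : ∫ t in (0:ℝ)..1, (θ' t - G t) * g t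
        = (∫ t in (0:ℝ)..1, θ' t * g t) - ∫ t in (0:ℝ)..1, G t * g t := by
      have hpt : (fun t => (θ' t - G t) * g t) = fun t => θ' t * g t - G t * g t := by
        funext t; ring
      rw [hpt]
      exact intervalIntegral.integral_sub (hI1.mul_continuousOn hg.continuousOn)
        ((hGcont.mul hg).intervalIntegrable _ _)
    rw [h5, h4, h1, h2, h3]
    ring
  -- du Bois-Reymond: θ' = G a.e. on (0,1]
  have haemem : ∀ᵐ x : ℝ, x ∈ Set.Ioc (0:ℝ) 1 → θ' x = G x := by
    set f : ℝ → ℝ := (Set.Ioc (0:ℝ) 1).indicator (fun t => θ' t - G t) with hfdef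
    have hfint : Integrable f volume := by
      apply IntegrableOn.integrable_indicator _ measurableSet_Ioc
      exact hI1.1.sub (hGcont.integrableOn_Ioc)
    have hzero : ∀ gg : ℝ → ℝ, ContDiff ℝ (⊤ : ℕ∞) gg → HasCompactSupport gg →
        ∫ x, gg x • f x = 0 := by
      intro gg hgg _
      have heq : ∀ x, gg x • f x
          = (Set.Ioc (0:ℝ) 1).indicator (fun t => (θ' t - G t) * gg t) x := by
        intro x
        by_cases hx : x ∈ Set.Ioc (0:ℝ) 1
        · simp [hfdef, Set.indicator_of_mem hx, smul_eq_mul, mul_comm]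
        · simp [hfdef, Set.indicator_of_notMem hx]
      rw [MeasureTheory.integral_congr_ae (Filter.Eventually.of_forall heq),
        MeasureTheory.integral_indicator measurableSet_Ioc,
        ← intervalIntegral.integral_of_le h01]
      exact hIBP gg hgg.continuous
    have haez := ae_eq_zero_of_integral_contDiff_smul_eq_zero hfint.locallyIntegrable hzero
    filter_upwards [haez] with x hx hmem
    rw [hfdef] at hx
    simp only [Set.indicator_of_mem hmem] at hx
    linarith
  -- identification of θ with the primitive of G
  have hid : ∀ s ∈ Set.Icc (0:ℝ) 1, θ s = ∫ t in (0:ℝ)..s, G t := by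
    intro s hs
    rw [hprim s hs]
    apply intervalIntegral.integral_congr_ae
    filter_upwards [haemem] with x hx hxmem
    apply hx
    rw [Set.uIoc_of_le hs.1] at hxmem
    exact ⟨hxmem.1, hxmem.2.trans hs.2⟩
  -- conclusion
  refine ⟨fun s => ∫ t in (0:ℝ)..s, G t, G, fun s hs => (hid s hs).symm,
    intervalIntegral.integral_same, ?_, hGcont, hG1, ?_, ?_⟩
  · have : Differentiable ℝ (fun s => ∫ t in (0:ℝ)..s, G t) := fun t =>
      (intervalIntegral.integral_hasDerivAt_right (hGcont.intervalIntegrable _ _)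
        (hGcont.stronglyMeasurableAtFilter _ _) hGcont.continuousAt).differentiableAt
    exact this.continuous
  · exact fun s => intervalIntegral.integral_hasDerivAt_right (hGcont.intervalIntegrable _ _)
      (hGcont.stronglyMeasurableAtFilter _ _) hGcont.continuousAt
  · intro s hs
    have := hG s
    have heq : hh s = b * (1 - s) * Real.cos (θ s) := by
      simp only [hhdef]; rw [hθceq s hs]; ring
    rwa [heq] at this

theorem minimizer_monotone_in_b (b₁ b₂ : ℝ) (hb₁ : 0 < b₁) (hb : b₁ < b₂)
    (θ₁ θ₁' θ₂ θ₂' : ℝ → ℝ)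
    (hmin₁ : IsMinimizer b₁ θ₁ θ₁') (hmin₂ : IsMinimizer b₂ θ₂ θ₂')
    (hr₁ : ∀ s ∈ Set.Icc (0:ℝ) 1, θ₁ s ∈ Set.Ico 0 (π / 2))
    (hr₂ : ∀ s ∈ Set.Icc (0:ℝ) 1, θ₂ s ∈ Set.Ico 0 (π / 2)) :
    (∀ s ∈ Set.Icc (0:ℝ) 1, θ₁ s ≤ θ₂ s) ∧
    (∀ s ∈ Set.Ioc (0:ℝ) 1, θ₁ s < θ₂ s) := by
  obtain ⟨u₁, g₁, hu₁eq, hu₁0, hu₁c, hg₁c, hg₁1, hu₁d, hg₁d⟩ :=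
    exists_nice b₁ θ₁ θ₁' hb₁ hmin₁
  obtain ⟨u₂, g₂, hu₂eq, hu₂0, hu₂c, hg₂c, hg₂1, hu₂d, hg₂d⟩ :=
    exists_nice b₂ θ₂ θ₂' (hb₁.trans hb) hmin₂
  have hr₁u : ∀ s ∈ Set.Icc (0:ℝ) 1, u₁ s ∈ Set.Ico 0 (π / 2) := fun s hs => by
    rw [hu₁eq s hs]; exact hr₁ s hs
  have hr₂u : ∀ s ∈ Set.Icc (0:ℝ) 1, u₂ s ∈ Set.Ico 0 (π / 2) := fun s hs => by
    rw [hu₂eq s hs]; exact hr₂ s hs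
  set φ : ℝ → ℝ := fun s => u₂ s - u₁ s with hφdef
  set Dg : ℝ → ℝ := fun s => g₂ s - g₁ s with hDgdef
  set h : ℝ → ℝ := fun s => b₂ * Real.cos (u₂ s) - b₁ * Real.cos (u₁ s) with hhdef
  have hφcont : Continuous φ := hu₂c.sub hu₁c
  have hDgcont : Continuous Dg := hg₂c.sub hg₁c
  have hhcont : Continuous h := (continuous_const.mul (Real.continuous_cos.comp hu₂c)).sub
    (continuous_const.mul (Real.continuous_cos.comp hu₁c))
  have hφd : ∀ s, HasDerivAt φ (Dg s) s := fun s => (hu₂d s).sub (hu₁d s)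
  have hφ0 : φ 0 = 0 := by simp [hφdef, hu₁0, hu₂0]
  have hDg1 : Dg 1 = 0 := by simp [hDgdef, hg₁1, hg₂1]
  have hDgd : ∀ s ∈ Set.Icc (0:ℝ) 1, HasDerivAt Dg (-((1 - s) * h s)) s := by
    intro s hs
    have := (hg₂d s hs).sub (hg₁d s hs)
    have heq : -(b₂ * (1 - s) * Real.cos (θ₂ s)) - -(b₁ * (1 - s) * Real.cos (θ₁ s))
        = -((1 - s) * h s) := by
      simp only [hhdef]
      rw [← hu₁eq s hs, ← hu₂eq s hs]
      ring
    rwa [heq] at this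
  have hforce : ∀ s ∈ Set.Icc (0:ℝ) 1, u₂ s ≤ u₁ s → 0 < h s := by
    intro s hs hle
    obtain ⟨h10, h1π⟩ := hr₁u s hs
    obtain ⟨h20, h2π⟩ := hr₂u s hs
    have hπ := Real.pi_pos
    have hcos1 : 0 < Real.cos (u₁ s) :=
      Real.cos_pos_of_mem_Ioo ⟨by linarith, h1π⟩
    have hcosle : Real.cos (u₁ s) ≤ Real.cos (u₂ s) :=
      Real.cos_le_cos_of_nonneg_of_le_pi h20 (by linarith) hle
    simp only [hhdef]
    nlinarith
  -- Weak inequality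
  have hweak : ∀ s ∈ Set.Icc (0:ℝ) 1, 0 ≤ φ s := by
    by_contra hcon
    push_neg at hcon
    obtain ⟨sbad, hsbad, hbadneg⟩ := hcon
    obtain ⟨s₀, hs₀, hmin₀⟩ := isCompact_Icc.exists_isMinOn
      (Set.nonempty_Icc.mpr (by norm_num : (0:ℝ) ≤ 1)) hφcont.continuousOn
    have hφs₀ : φ s₀ < 0 := lt_of_le_of_lt (hmin₀ hsbad) hbadneg
    have hs₀pos : 0 < s₀ := by
      rcases eq_or_lt_of_le hs₀.1 with h0 | h0
      · exfalso; rw [← h0] at hφs₀; linarith [hφ0]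
      · exact h0
    set A : Set ℝ := Set.Icc 0 s₀ ∩ φ ⁻¹' {0} with hAdef
    have hA0 : (0:ℝ) ∈ A := ⟨Set.left_mem_Icc.mpr hs₀.1, hφ0⟩
    have hAc : IsClosed A := isClosed_Icc.inter (isClosed_singleton.preimage hφcont)
    have hAcomp : IsCompact A := isCompact_Icc.of_isClosed_subset hAc Set.inter_subset_left
    set a : ℝ := sSup A with hadef
    have haA : a ∈ A := hAcomp.sSup_mem ⟨0, hA0⟩
    have hφa : φ a = 0 := haA.2
    have halt : a < s₀ := lt_of_le_of_ne haA.1.2 (fun hEq => by rw [hEq] at hφa; linarith)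
    have ha0 : 0 ≤ a := haA.1.1
    have hneg : ∀ t ∈ Set.Ioc a s₀, φ t < 0 := by
      intro t ht
      by_contra hnn
      push_neg at hnn
      have htlt : t < s₀ := lt_of_le_of_ne ht.2 (fun hEq => by rw [hEq] at hnn; linarith)
      have hIVT := intermediate_value_Icc' (le_of_lt htlt) (hφcont.continuousOn (s := Set.Icc t s₀))
      have h0mem : (0:ℝ) ∈ Set.Icc (φ s₀) (φ t) := ⟨le_of_lt hφs₀, hnn⟩
      obtain ⟨c, hc, hc0⟩ := hIVT h0mem
      have hcA : c ∈ A := ⟨⟨le_trans ha0 (le_trans ht.1.le hc.1), hc.2⟩, hc0⟩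
      have : c ≤ a := le_csSup hAcomp.bddAbove hcA
      linarith [lt_of_lt_of_le ht.1 hc.1]
    have hDgs₀ : Dg s₀ = 0 := by
      rcases eq_or_lt_of_le hs₀.2 with h1 | h1
      · rw [h1]; exact hDg1
      · have hloc : IsLocalMin φ s₀ := hmin₀.isLocalMin (Icc_mem_nhds hs₀pos h1)
        have := hloc.deriv_eq_zero
        rwa [(hφd s₀).deriv] at this
    have hanti : StrictAntiOn Dg (Set.Icc a s₀) := by
      apply strictAntiOn_of_deriv_neg (convex_Icc a s₀) hDgcont.continuousOn
      intro t ht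
      rw [interior_Icc] at ht
      have htI : t ∈ Set.Icc (0:ℝ) 1 := ⟨le_trans ha0 ht.1.le, le_trans ht.2.le hs₀.2⟩
      rw [(hDgd t htI).deriv]
      have hφt : φ t < 0 := hneg t ⟨ht.1, ht.2.le⟩
      have hht : 0 < h t := hforce t htI (by simp only [hφdef] at hφt; linarith)
      have ht1 : t < 1 := lt_of_lt_of_le ht.2 hs₀.2
      nlinarith
    have hpos : ∀ t ∈ Set.Ico a s₀, 0 < Dg t := by
      intro t ht
      have := hanti ⟨ht.1, ht.2.le⟩ (Set.right_mem_Icc.mpr (le_of_lt halt)) ht.2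
      rwa [hDgs₀] at this
    have hmono : StrictMonoOn φ (Set.Icc a s₀) := by
      apply strictMonoOn_of_deriv_pos (convex_Icc a s₀) hφcont.continuousOn
      intro t ht
      rw [interior_Icc] at ht
      rw [(hφd t).deriv]
      exact hpos t ⟨ht.1.le, ht.2⟩
    have := hmono (Set.left_mem_Icc.mpr (le_of_lt halt))
      (Set.right_mem_Icc.mpr (le_of_lt halt)) halt
    rw [hφa] at this
    linarith
  -- Strict inequality
  have hstrict : ∀ s ∈ Set.Ioc (0:ℝ) 1, 0 < φ s := by
    intro s hs
    by_contra hns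
    push_neg at hns
    have hsIcc : s ∈ Set.Icc (0:ℝ) 1 := ⟨hs.1.le, hs.2⟩
    have hφs0 : φ s = 0 := le_antisymm hns (hweak s hsIcc)
    have hueq : u₂ s ≤ u₁ s := by simp only [hφdef] at hφs0; linarith
    have hhs : 0 < h s := hforce s hsIcc hueq
    obtain ⟨δ, hδpos, hball⟩ := Metric.isOpen_iff.mp
      (isOpen_lt continuous_const hhcont) s hhs
    have hballpos : ∀ t : ℝ, |t - s| < δ → 0 < h t := by
      intro t ht
      exact hball (by rwa [Metric.mem_ball, Real.dist_eq])
    rcases eq_or_lt_of_le hs.2 with hs1 | hs1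
    · -- s = 1
      set a : ℝ := max (1 - δ/2) (1/2) with hadef
      have ha1 : a < 1 := max_lt (by linarith) (by norm_num)
      have ha0 : (0:ℝ) ≤ a := le_trans (by norm_num) (le_max_right _ _)
      have ha2 : 1 - δ < a := lt_of_lt_of_le (by linarith) (le_max_left _ _)
      have hanti : StrictAntiOn Dg (Set.Icc a 1) := by
        apply strictAntiOn_of_deriv_neg (convex_Icc a 1) hDgcont.continuousOn
        intro t ht
        rw [interior_Icc] at ht
        have htI : t ∈ Set.Icc (0:ℝ) 1 := ⟨le_trans ha0 ht.1.le, ht.2.le⟩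
        rw [(hDgd t htI).deriv]
        have hht : 0 < h t := by
          apply hballpos
          rw [hs1, abs_sub_lt_iff]
          constructor <;> [linarith [ht.2]; linarith [ht.1, ha2]]
        nlinarith [ht.2]
      have hpos : ∀ t ∈ Set.Ico a 1, 0 < Dg t := by
        intro t ht
        have := hanti ⟨ht.1, ht.2.le⟩ (Set.right_mem_Icc.mpr (le_of_lt ha1)) ht.2
        rwa [hDg1] at this
      have hmono : StrictMonoOn φ (Set.Icc a 1) := by
        apply strictMonoOn_of_deriv_pos (convex_Icc a 1) hφcont.continuousOn
        intro t ht
        rw [interior_Icc] at ht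
        rw [(hφd t).deriv]
        exact hpos t ⟨ht.1.le, ht.2⟩
      have hlt := hmono (Set.left_mem_Icc.mpr (le_of_lt ha1))
        (Set.right_mem_Icc.mpr (le_of_lt ha1)) ha1
      rw [hs1] at hφs0
      rw [hφs0] at hlt
      have := hweak a ⟨ha0, le_of_lt ha1⟩
      linarith
    · -- s < 1
      set c : ℝ := min (s + δ/2) ((s+1)/2) with hcdef
      have hc1 : s < c := lt_min (by linarith) (by linarith)
      have hc2 : c < 1 := lt_of_le_of_lt (min_le_right _ _) (by linarith)
      have hc3 : c < s + δ := lt_of_le_of_lt (min_le_left _ _) (by linarith)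
      have hDgs : Dg s = 0 := by
        have hminon : IsMinOn φ (Set.Icc (0:ℝ) 1) s := by
          intro t ht
          simp only [Set.mem_setOf_eq, hφs0]
          exact hweak t ht
        have hloc : IsLocalMin φ s := hminon.isLocalMin (Icc_mem_nhds hs.1 hs1)
        have := hloc.deriv_eq_zero
        rwa [(hφd s).deriv] at this
      have hanti : StrictAntiOn Dg (Set.Icc s c) := by
        apply strictAntiOn_of_deriv_neg (convex_Icc s c) hDgcont.continuousOn
        intro t ht
        rw [interior_Icc] at ht
        have htI : t ∈ Set.Icc (0:ℝ) 1 := ⟨le_trans hs.1.le ht.1.le, le_of_lt (ht.2.trans hc2)⟩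
        rw [(hDgd t htI).deriv]
        have hht : 0 < h t := by
          apply hballpos
          rw [abs_sub_lt_iff]
          constructor <;> [linarith [ht.2]; linarith [ht.1]]
        nlinarith [ht.2.trans hc2]
      have hDgneg : ∀ t ∈ Set.Ioc s c, Dg t < 0 := by
        intro t ht
        have := hanti (Set.left_mem_Icc.mpr (le_of_lt hc1)) ⟨ht.1.le, ht.2⟩ ht.1
        rwa [hDgs] at this
      have hφanti : StrictAntiOn φ (Set.Icc s c) := by
        apply strictAntiOn_of_deriv_neg (convex_Icc s c) hφcont.continuousOn
        intro t ht
        rw [interior_Icc] at ht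
        rw [(hφd t).deriv]
        exact hDgneg t ⟨ht.1, ht.2.le⟩
      have hlt := hφanti (Set.left_mem_Icc.mpr (le_of_lt hc1))
        (Set.right_mem_Icc.mpr (le_of_lt hc1)) hc1
      rw [hφs0] at hlt
      have := hweak c ⟨le_trans hs.1.le hc1.le, le_of_lt hc2⟩
      linarith
  constructor
  · intro s hs
    have := hweak s hs
    simp only [hφdef] at this
    rw [← hu₁eq s hs, ← hu₂eq s hs]
    linarith
  · intro s hs
    have hsIcc : s ∈ Set.Icc (0:ℝ) 1 := ⟨hs.1.le, hs.2⟩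
    have := hstrict s hs
    simp only [hφdef] at this
    rw [← hu₁eq s hsIcc, ← hu₂eq s hsIcc]
    linarith
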